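/- Let α > −1, b > 1, and β = (2/π)·arccos(1/b) ∈ (0,1). There exist a holomorphic map φ : 𝔻 → 𝔻 with φ(𝔻) ⊆ Γ(1,b), a constant C > 0 and h₀ ∈ (0,1) such that v_α(φ⁻¹(S(1,h))) ≥ C·h^{(2+α)/β} for every 0 < h < h₀. -/

import Mathlib

open MeasureTheory Set Filter Metric

lemma poly9 (B x y t : ℝ) (hB0 : 0 < B) (hB1 : B < 1) (ht : 0 < t)
    (ht16 : t ≤ (1 - B^2)/16) (hx : B*t ≤ x) (hxyt : x^2 + y^2 = t^2) :
    (B + (1 - B^2)*t/8) * t * (1 - x/4 + t^2/32) ≤ x - (x^2 - y^2)/4 := by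
  have ht1 : t ≤ 1/16 := by nlinarith
  have hxt : x ≤ t := by nlinarith [sq_nonneg y, sq_nonneg (x - t), sq_nonneg (x+t)]
  have key : 0 ≤ (x - B*t) * (1 - (x + B*t)/2 + (B + (1-B^2)*t/8)*t/4) := by
    have h2 : (0:ℝ) ≤ 1 - (x + B*t)/2 + (B + (1-B^2)*t/8)*t/4 := by nlinarith
    exact mul_nonneg (by linarith) h2
  nlinarith [key, mul_pos ht ht, mul_nonneg (mul_nonneg ht.le ht.le) ht.le,
    mul_nonneg (mul_nonneg (mul_nonneg ht.le ht.le) ht.le) ht.le,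
    mul_nonneg (mul_nonneg ht.le ht.le) (sub_nonneg.2 ht16)]

lemma cpow_re9 (u : ℂ) (β : ℝ) (hu : u ≠ 0) :
    (u ^ (β:ℂ)).re = ‖u‖ ^ β * Real.cos (u.arg * β) := by
  rw [Complex.cpow_def_of_ne_zero hu, Complex.exp_re]
  have h1 : (Complex.log u * (β:ℂ)).re = Real.log (‖u‖) * β := by
    simp [Complex.mul_re, Complex.log_re, Complex.log_im]
  have h2 : (Complex.log u * (β:ℂ)).im = u.arg * β := by
    simp [Complex.mul_im, Complex.log_re, Complex.log_im]
  rw [h1, h2, Real.rpow_def_of_pos (norm_pos_iff.mpr hu)]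


/-- The non-tangential (Stolz-type) approach region
`Γ(1,b) = {z ∈ 𝔻 : |1 − z| < (b/2)(1 − |z|²)}` at the point `1`. -/
def Koranyi (b : ℝ) : Set ℂ :=
  {z : ℂ | ‖z‖ < 1 ∧ ‖1 - z‖ < b / 2 * (1 - ‖z‖ ^ 2)}

/-- The non-isotropic ball `S(1,h) = {z ∈ 𝔻 : |1 − z| < h}` at the point `1`. -/
def discS (h : ℝ) : Set ℂ :=
  {z : ℂ | ‖z‖ < 1 ∧ ‖1 - z‖ < h}

/-- The weighted measure `v_α = (1 − |z|²)^α dA(z)` on the unit disc `𝔻 ⊆ ℂ`. -/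
noncomputable def vDisc (α : ℝ) : Measure ℂ :=
  (volume.restrict (Metric.ball (0:ℂ) 1)).withDensity
    fun z => ENNReal.ofReal ((1 - ‖z‖ ^ 2) ^ α)

lemma measure_lb (α : ℝ) (r : ℝ) (hr0 : 0 < r) (hr1 : r < 1) (S : Set ℂ)
    (hS : Metric.ball (((1 - 3*r/4 : ℝ)) : ℂ) (r/4) ⊆ S) :
    ENNReal.ofReal (min (2^(-α)) (2^α) * (Real.pi / 16) * r ^ (2+α)) ≤ vDisc α S := by
  set c : ℂ := ((1 - 3*r/4 : ℝ) : ℂ) with hc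
  set E := Metric.ball c (r/4) with hE
  have hzabs : ∀ z ∈ E, ‖z‖ ≤ 1 - r/2 ∧ 1 - r ≤ ‖z‖ ∧
      r/2 ≤ 1 - ‖z‖ ^ 2 ∧ 1 - ‖z‖ ^ 2 ≤ 2*r := by
    intro z hz
    rw [hE, Metric.mem_ball, Complex.dist_eq] at hz
    have hcabs : ‖c‖ = 1 - 3*r/4 := by
      rw [hc, Complex.norm_real, Real.norm_eq_abs, abs_of_nonneg (by linarith)]
    have h1 : ‖z‖ ≤ 1 - r/2 := by
      have := norm_add_le (z - c) c
      simp only [sub_add_cancel] at this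
      rw [hcabs] at this; linarith
    have h2 : 1 - r ≤ ‖z‖ := by
      have := norm_add_le (c - z) z
      simp only [sub_add_cancel] at this
      rw [hcabs] at this
      rw [norm_sub_rev c z] at this
      linarith
    have h0 : 0 ≤ ‖z‖ := norm_nonneg z
    refine ⟨h1, h2, by nlinarith, by nlinarith⟩
  have hEsub : E ⊆ Metric.ball (0:ℂ) 1 := by
    intro z hz
    rw [Metric.mem_ball, Complex.dist_eq, sub_zero]
    linarith [(hzabs z hz).1]
  have hmeas : MeasurableSet E := measurableSet_ball
  have h1 : vDisc α S ≥ vDisc α E := measure_mono hS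
  have h2 : vDisc α E = ∫⁻ z in E, ENNReal.ofReal ((1 - ‖z‖ ^ 2) ^ α) ∂(volume.restrict (Metric.ball (0:ℂ) 1)) := by
    rw [vDisc, withDensity_apply _ hmeas]
  have h3 : (volume.restrict (Metric.ball (0:ℂ) 1)).restrict E = volume.restrict E := by
    rw [Measure.restrict_restrict hmeas, Set.inter_eq_self_of_subset_left hEsub]
  have hpt : ∀ z ∈ E, ENNReal.ofReal (min (2^(-α)) (2^α) * r ^ α) ≤
      ENNReal.ofReal ((1 - ‖z‖ ^ 2) ^ α) := by
    intro z hz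
    obtain ⟨hz1, hz2, hz3, hz4⟩ := hzabs z hz
    apply ENNReal.ofReal_le_ofReal
    rcases le_or_gt 0 α with hα0 | hα0
    · calc min (2^(-α)) (2^α) * r ^ α ≤ 2^(-α) * r ^ α := by
            apply mul_le_mul_of_nonneg_right (min_le_left _ _) (Real.rpow_nonneg hr0.le _)
      _ = (r/2) ^ α := by
            rw [Real.div_rpow hr0.le (by norm_num), Real.rpow_neg (by norm_num)]
            ring
      _ ≤ (1 - ‖z‖ ^ 2) ^ α := Real.rpow_le_rpow (by linarith) hz3 hα0
    · calc min (2^(-α)) (2^α) * r ^ α ≤ 2^α * r ^ α := by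
            apply mul_le_mul_of_nonneg_right (min_le_right _ _) (Real.rpow_nonneg hr0.le _)
      _ = (2*r) ^ α := (Real.mul_rpow (by norm_num) hr0.le).symm
      _ ≤ (1 - ‖z‖ ^ 2) ^ α := Real.rpow_le_rpow_of_nonpos (by linarith) hz4 hα0.le
  have h4 : ENNReal.ofReal (min (2^(-α)) (2^α) * r ^ α) * volume E ≤ vDisc α E := by
    rw [h2]
    calc ENNReal.ofReal (min (2^(-α)) (2^α) * r ^ α) * volume E
        = ∫⁻ _ in E, ENNReal.ofReal (min (2^(-α)) (2^α) * r ^ α) ∂(volume.restrict (Metric.ball (0:ℂ) 1)) := by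
          rw [MeasureTheory.setLIntegral_const, Measure.restrict_apply hmeas,
            Set.inter_eq_self_of_subset_left hEsub]
      _ ≤ _ := by
          refine setLIntegral_mono ?_ hpt
          exact ((measurable_const.sub (continuous_norm.measurable.pow_const 2)).pow
            measurable_const).ennreal_ofReal
  have hvol : volume E = ENNReal.ofReal ((r/4)^2) * NNReal.pi := by
    rw [hE, Complex.volume_ball, ← ENNReal.ofReal_pow (by linarith)]
  calc ENNReal.ofReal (min (2^(-α)) (2^α) * (Real.pi / 16) * r ^ (2+α))
      = ENNReal.ofReal (min (2^(-α)) (2^α) * r ^ α * ((r/4)^2 * Real.pi)) := by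
        congr 1
        have : r ^ (2+α) = r^(2:ℝ) * r ^ α := by
          rw [← Real.rpow_add hr0]; try norm_num
        rw [this, Real.rpow_two]
        ring
    _ = ENNReal.ofReal (min (2^(-α)) (2^α) * r ^ α) * (ENNReal.ofReal ((r/4)^2) * NNReal.pi) := by
        rw [← NNReal.coe_real_pi, ENNReal.ofReal_mul (by positivity),
          ENNReal.ofReal_mul (by positivity), ENNReal.ofReal_mul (by positivity),
          ENNReal.ofReal_coe_nnreal, mul_assoc]
    _ = ENNReal.ofReal (min (2^(-α)) (2^α) * r ^ α) * volume E := by rw [hvol]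
    _ ≤ vDisc α E := h4
    _ ≤ vDisc α S := h1

set_option maxHeartbeats 2000000 in
/-- for `α > −1`, `b > 1` and `β = (2/π) arccos(1/b) ∈ (0,1)`, there is a
holomorphic `φ : 𝔻 → 𝔻` with range in `Γ(1,b)` and constants `C > 0`, `h₀ ∈ (0,1)` such
that `v_α(φ⁻¹(S(1,h))) ≥ C h^{(2+α)/β}` for every `0 < h < h₀`. -/
theorem stmt9 (α b β : ℝ) (hα : -1 < α) (hb : 1 < b)
    (hβdef : β = 2 / Real.pi * Real.arccos (1 / b)) (hβmem : β ∈ Ioo (0:ℝ) 1) :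
    ∃ φ : ℂ → ℂ, DifferentiableOn ℂ φ (Metric.ball 0 1) ∧
      MapsTo φ (Metric.ball 0 1) (Koranyi b) ∧
      ∃ C > (0:ℝ), ∃ h₀ ∈ Ioo (0:ℝ) 1, ∀ h : ℝ, 0 < h → h < h₀ →
        ENNReal.ofReal (C * h ^ ((2 + α) / β)) ≤ vDisc α (φ ⁻¹' discS h) := by
  obtain ⟨hβ0, hβ1⟩ := hβmem
  set B : ℝ := 1/b with hBdef
  have hB0 : 0 < B := by rw [hBdef]; positivity
  have hB1 : B < 1 := by rw [hBdef, div_lt_one (by linarith)]; linarith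
  have hbB : b * B = 1 := by rw [hBdef]; field_simp
  set s2 : ℝ := 1 - B^2 with hs2def
  have hs2 : 0 < s2 := by rw [hs2def]; nlinarith only [hB0, hB1]
  have hs2le : s2 ≤ 1 := by rw [hs2def]; nlinarith only [hB0]
  set κ : ℝ := s2/32 with hκdef
  set ε : ℝ := s2/16 with hεdef
  have hκ : 0 < κ := by rw [hκdef]; linarith
  have hε : 0 < ε := by rw [hεdef]; linarith
  have hεκ : ε = 2*κ := by rw [hεdef, hκdef]; ring
  have hA : β * (Real.pi/2) = Real.arccos B := by
    rw [hβdef]; field_simp; try ring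
  have hcosA : Real.cos (β * (Real.pi/2)) = B := by
    rw [hA]; exact Real.cos_arccos (by linarith) (by linarith)
  clear_value B s2 κ ε
  set φ : ℂ → ℂ := fun z =>
    1 - (ε:ℂ) * ((κ:ℂ) * (1-z) ^ (β:ℂ)) * (1 - ((1/4:ℝ):ℂ) * ((κ:ℂ) * (1-z) ^ (β:ℂ))) with hφdef
  have hdiff : DifferentiableOn ℂ φ (Metric.ball 0 1) := by
    rw [hφdef]
    intro z hz
    apply DifferentiableAt.differentiableWithinAt
    rw [Metric.mem_ball, Complex.dist_eq, sub_zero] at hz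
    have hure : 0 < (1 - z).re := by
      have h1 : z.re ≤ ‖z‖ := Complex.re_le_norm z
      simp only [Complex.sub_re, Complex.one_re]
      linarith
    have hslit : (1 : ℂ) - z ∈ Complex.slitPlane := Or.inl hure
    have h1 : DifferentiableAt ℂ (fun z : ℂ => (1 - z) ^ (β:ℂ)) z :=
      DifferentiableAt.cpow ((differentiableAt_const _).sub differentiableAt_id)
        (differentiableAt_const _) hslit
    have h2 : DifferentiableAt ℂ (fun z : ℂ => (κ:ℂ) * (1 - z) ^ (β:ℂ)) z := h1.const_mul _
    have h3 : DifferentiableAt ℂ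
        (fun z : ℂ => (ε:ℂ) * ((κ:ℂ) * (1 - z) ^ (β:ℂ))) z := h2.const_mul _
    have h4 : DifferentiableAt ℂ
        (fun z : ℂ => 1 - ((1/4:ℝ):ℂ) * ((κ:ℂ) * (1 - z) ^ (β:ℂ))) z :=
      (h2.const_mul _).const_sub _
    exact (h3.mul h4).const_sub _
  clear_value φ
  have key : ∀ z : ℂ, ‖z‖ < 1 →
      φ z ∈ {w : ℂ | ‖w‖ < 1 ∧ ‖1 - w‖ < b / 2 * (1 - ‖w‖ ^ 2)}
      ∧ ‖1 - φ z‖ ≤ (2*ε*κ) * ‖1-z‖ ^ β := by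
    intro z hz
    have hure : 0 < (1 - z).re := by
      have h1 : z.re ≤ ‖z‖ := Complex.re_le_norm z
      simp only [Complex.sub_re, Complex.one_re]
      linarith
    have hu0 : (1 : ℂ) - z ≠ 0 := by
      intro h
      rw [h] at hure; simp at hure
    have huabs : 0 < ‖1-z‖ := norm_pos_iff.mpr hu0
    have hu2 : ‖1-z‖ < 2 := by
      calc ‖1-z‖ ≤ ‖(1:ℂ)‖ + ‖z‖ := by
            simpa [sub_eq_add_neg] using norm_add_le 1 (-z)
        _ < 2 := by
            simp only [norm_one]
            linarith
    set R : ℝ := ‖1-z‖ ^ β with hRdef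
    have hR0 : 0 < R := Real.rpow_pos_of_pos huabs β
    have hR2 : R ≤ 2 := by
      calc R ≤ (2:ℝ) ^ β := Real.rpow_le_rpow (norm_nonneg _) hu2.le hβ0.le
        _ ≤ (2:ℝ) ^ (1:ℝ) := Real.rpow_le_rpow_of_exponent_le one_le_two hβ1.le
        _ = 2 := Real.rpow_one 2
    clear_value R
    set t : ℝ := κ * R with htdef
    have ht : 0 < t := mul_pos hκ hR0
    have ht16 : t ≤ (1 - B^2)/16 := by
      have h1 : κ * R ≤ κ * 2 := mul_le_mul_of_nonneg_left hR2 hκ.le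
      rw [htdef, hκdef] at *
      rw [← hs2def]
      linarith
    clear_value t
    have ht1 : t ≤ 1/16 := by
      have h9 : s2 ≤ 1 := hs2le
      rw [hs2def] at h9
      linarith [ht16]
    -- p and its re/im
    set p : ℂ := (κ:ℂ) * (1-z) ^ (β:ℂ) with hpdef
    set x : ℝ := p.re with hxdef
    set y : ℝ := p.im with hydef
    have habs_p : ‖p‖ = t := by
      rw [hpdef, norm_mul, Complex.norm_real, Real.norm_eq_abs, abs_of_pos hκ, Complex.norm_cpow_real,
        htdef, hRdef]
    have hcos : B ≤ Real.cos ((1-z).arg * β) := by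
      have harg : |(1-z).arg| < Real.pi/2 :=
        Complex.abs_arg_lt_pi_div_two_iff.mpr (Or.inl hure)
      have h1 : |(1-z).arg * β| ≤ β * (Real.pi/2) := by
        rw [abs_mul, abs_of_pos hβ0]
        have := abs_nonneg (1-z).arg
        nlinarith only [harg, hβ0, this]
      calc B = Real.cos (β * (Real.pi/2)) := hcosA.symm
        _ ≤ Real.cos |(1-z).arg * β| := by
            apply Real.cos_le_cos_of_nonneg_of_le_pi (abs_nonneg _) ?_ h1
            rw [hA]; exact Real.arccos_le_pi B
        _ = Real.cos ((1-z).arg * β) := Real.cos_abs _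
    have hx : B * t ≤ x := by
      have hre : x = κ * (R * Real.cos ((1-z).arg * β)) := by
        rw [hxdef, hpdef, Complex.re_ofReal_mul, cpow_re9 _ _ hu0, hRdef]
      have h2 : κ * R * B ≤ κ * R * Real.cos ((1-z).arg * β) :=
        mul_le_mul_of_nonneg_left hcos (by nlinarith only [hκ, hR0])
      rw [hre, htdef]
      linarith
    have hxyt : x^2 + y^2 = t^2 := by
      have h := Complex.sq_norm p
      rw [habs_p, Complex.normSq_apply] at h
      rw [hxdef, hydef, h]; ring
    clear_value x y p
    have hxt : x ≤ t := by
      nlinarith only [hxyt, ht, sq_nonneg y, sq_nonneg (x - t), sq_nonneg (x + t)]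
    -- q
    set q : ℂ := 1 - ((1/4:ℝ):ℂ) * p with hqdef
    have hq_sq : (‖q‖)^2 = 1 - x/2 + t^2/16 := by
      rw [Complex.sq_norm, Complex.normSq_apply, hqdef]
      simp only [Complex.sub_re, Complex.sub_im, Complex.one_re, Complex.one_im,
        Complex.re_ofReal_mul, Complex.im_ofReal_mul]
      rw [← hxdef, ← hydef]
      linear_combination hxyt / 16
    have hq0 : 0 ≤ 1 - x/4 + t^2/32 := by nlinarith only [hxt, ht1, sq_nonneg t]
    have hq_le : ‖q‖ ≤ 1 - x/4 + t^2/32 := by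
      nlinarith only [hq_sq, hq0, norm_nonneg q, sq_nonneg (x/4 - t^2/32),
        sq_nonneg (‖q‖ - (1 - x/4 + t^2/32)),
        sq_nonneg (‖q‖ + (1 - x/4 + t^2/32))]
    have habs_p4 : ‖((1/4:ℝ):ℂ) * p‖ = t/4 := by
      rw [norm_mul, Complex.norm_real, Real.norm_eq_abs, habs_p,
        abs_of_nonneg (by norm_num : (0:ℝ) ≤ (1/4:ℝ))]
      ring
    have hq_le2 : ‖q‖ ≤ 2 := by
      calc ‖q‖ ≤ ‖(1:ℂ)‖ + ‖((1/4:ℝ):ℂ) * p‖ := by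
            simpa [hqdef, sub_eq_add_neg] using norm_add_le 1 (-(((1/4:ℝ):ℂ) * p))
        _ = 1 + t/4 := by rw [norm_one, habs_p4]
        _ ≤ 2 := by linarith
    have hq_pos : 0 < ‖q‖ := by
      have h1 : (1:ℝ) ≤ ‖q‖ + ‖((1/4:ℝ):ℂ) * p‖ := by
        calc (1:ℝ) = ‖1 - ((1/4:ℝ):ℂ)*p + ((1/4:ℝ):ℂ)*p‖ := by norm_num
          _ ≤ ‖1 - ((1/4:ℝ):ℂ)*p‖ + ‖((1/4:ℝ):ℂ)*p‖ :=
              norm_add_le _ _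
          _ = ‖q‖ + ‖((1/4:ℝ):ℂ) * p‖ := by rw [← hqdef]
      rw [habs_p4] at h1
      linarith
    clear_value q
    -- w
    set w : ℂ := (ε:ℂ) * p * q with hwdef
    have hφz : φ z = 1 - w := by
      simp only [hφdef]
      rw [hwdef, hqdef, hpdef]
    clear_value w
    have hw_re : w.re = ε * (x - (x^2 - y^2)/4) := by
      rw [hwdef, hqdef]
      simp only [Complex.mul_re, Complex.mul_im, Complex.sub_re, Complex.sub_im,
        Complex.one_re, Complex.one_im, Complex.ofReal_re, Complex.ofReal_im,
        Complex.re_ofReal_mul, Complex.im_ofReal_mul]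
      rw [← hxdef, ← hydef]
      ring
    have habs_w : ‖w‖ = ε * (t * ‖q‖) := by
      rw [hwdef, norm_mul, norm_mul, Complex.norm_real, Real.norm_eq_abs, abs_of_pos hε, habs_p]
      ring
    have hw_pos : 0 < ‖w‖ := by
      rw [habs_w]
      exact mul_pos hε (mul_pos ht hq_pos)
    have hm : 0 < s2 * t/8 := by
      have := mul_pos hs2 ht
      linarith
    have hwm : ‖w‖ ≤ s2 * t/8 := by
      have h2 : (ε * t) * ‖q‖ ≤ (ε * t) * 2 :=
        mul_le_mul_of_nonneg_left hq_le2 (mul_pos hε ht).le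
      rw [habs_w, hεdef] at *
      nlinarith only [h2, ht]
    have hrew : (B + s2 * t/8) * ‖w‖ ≤ w.re := by
      have h9 : 0 < 1 - B^2 := by rw [← hs2def]; exact hs2
      have hpoly := poly9 B x y t hB0 hB1 ht ht16 hx hxyt
      have hc : 0 ≤ (B + (1-B^2)*t/8) * t :=
        mul_nonneg (by nlinarith only [hB0, mul_pos h9 ht, ht]) ht.le
      have h1 : ((B + (1-B^2)*t/8) * t) * ‖q‖
          ≤ ((B + (1-B^2)*t/8) * t) * (1 - x/4 + t^2/32) :=
        mul_le_mul_of_nonneg_left hq_le hc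
      have h2 : ε * (((B + (1-B^2)*t/8) * t) * ‖q‖) ≤ ε * (x - (x^2-y^2)/4) := by
        apply mul_le_mul_of_nonneg_left _ hε.le
        calc ((B + (1-B^2)*t/8) * t) * ‖q‖
            ≤ ((B + (1-B^2)*t/8) * t) * (1 - x/4 + t^2/32) := h1
          _ ≤ x - (x^2-y^2)/4 := by linarith only [hpoly]
      rw [hw_re, habs_w, hs2def]
      nlinarith only [h2]
    -- conclusions
    have hsqabs : ‖φ z‖ ^ 2 = 1 - 2*w.re + ‖w‖ ^ 2 := by
      rw [hφz, Complex.sq_norm, Complex.normSq_apply]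
      have h := Complex.sq_norm w
      rw [Complex.normSq_apply] at h
      simp only [Complex.sub_re, Complex.sub_im, Complex.one_re, Complex.one_im]
      linear_combination -h
    have h1mφ : (1:ℂ) - φ z = w := by rw [hφz]; ring
    have hWW : ‖w‖ * ‖w‖ ≤ ‖w‖ * (s2*t/8) :=
      mul_le_mul_of_nonneg_left hwm hw_pos.le
    have hBW : 0 < B * ‖w‖ := mul_pos hB0 hw_pos
    have hmW : 0 < (s2*t/8) * ‖w‖ := mul_pos hm hw_pos
    have habsφlt : ‖φ z‖ < 1 := by
      have hsq : ‖φ z‖^2 < 1 := by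
        rw [hsqabs]
        nlinarith only [hrew, hWW, hBW, hmW]
      nlinarith only [hsq, norm_nonneg (φ z)]
    refine ⟨⟨habsφlt, ?_⟩, ?_⟩
    · rw [h1mφ, hsqabs]
      have hb2 : (0:ℝ) < b/2 := by linarith
      have e1 : b/2 * ((B + s2*t/8) * ‖w‖) ≤ b/2 * w.re :=
        mul_le_mul_of_nonneg_left hrew hb2.le
      have e3 : b/2 * (‖w‖ * ‖w‖) ≤ b/2 * (‖w‖ * (s2*t/8)) :=
        mul_le_mul_of_nonneg_left hWW hb2.le
      have e5 : b * B * ‖w‖ = ‖w‖ := by rw [hbB, one_mul]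
      have e6 : 0 < b * (s2*t/8) * ‖w‖ :=
        mul_pos (mul_pos (by linarith) hm) hw_pos
      nlinarith only [e1, e3, e5, e6, sq_nonneg (‖w‖)]
    · rw [h1mφ, habs_w, htdef]
      have e := mul_le_mul_of_nonneg_left hq_le2
        (le_of_lt (mul_pos hε (mul_pos hκ hR0)))
      nlinarith only [e]
  refine ⟨φ, hdiff, ?_, ?_⟩
  · intro z hz
    rw [Metric.mem_ball, Complex.dist_eq, sub_zero] at hz
    exact (key z hz).1
  · set M : ℝ := 2*ε*κ with hMdef
    have hM : 0 < M := by rw [hMdef]; positivity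
    set cα : ℝ := min ((2:ℝ)^(-α)) ((2:ℝ)^α) with hcαdef
    have hcα : 0 < cα := lt_min (Real.rpow_pos_of_pos two_pos _) (Real.rpow_pos_of_pos two_pos _)
    have hMγ : 0 < M ^ ((2+α)/β) := Real.rpow_pos_of_pos hM _
    have hpi : (0:ℝ) < Real.pi := Real.pi_pos
    refine ⟨cα * (Real.pi/16) / M ^ ((2+α)/β), by positivity, min (1/2) M, ?_, ?_⟩
    · constructor
      · exact lt_min (by norm_num) hM
      · calc min (1/2 : ℝ) M ≤ 1/2 := min_le_left _ _
          _ < 1 := by norm_num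
    · intro h hh0 hh1
      have hhM : h < M := lt_of_lt_of_le hh1 (min_le_right _ _)
      have hdivpos : 0 < h/M := div_pos hh0 hM
      set r : ℝ := (h/M) ^ (β⁻¹) with hrdef
      have hr0 : 0 < r := Real.rpow_pos_of_pos hdivpos _
      have hr1 : r < 1 :=
        Real.rpow_lt_one hdivpos.le ((div_lt_one hM).mpr hhM) (inv_pos.mpr hβ0)
      have hrβ : r ^ β = h / M := by
        rw [hrdef, ← Real.rpow_mul hdivpos.le, inv_mul_cancel₀ (ne_of_gt hβ0), Real.rpow_one]
      have hsub : Metric.ball (((1 - 3*r/4 : ℝ)) : ℂ) (r/4) ⊆ φ ⁻¹' discS h := by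
        intro z hz
        rw [Metric.mem_ball, Complex.dist_eq] at hz
        have hcabs : ‖(((1 - 3*r/4 : ℝ)) : ℂ)‖ = 1 - 3*r/4 := by
          rw [Complex.norm_real, Real.norm_eq_abs, abs_of_nonneg (by linarith)]
        have hz1 : ‖z‖ < 1 := by
          have h1 := norm_add_le (z - ((1 - 3*r/4 : ℝ) : ℂ)) (((1 - 3*r/4 : ℝ)) : ℂ)
          simp only [sub_add_cancel] at h1
          rw [hcabs] at h1
          linarith
        have h1z : ‖1 - z‖ < r := by
          have h2 := norm_add_le ((3*r/4 : ℝ) : ℂ) ((((1 - 3*r/4 : ℝ)) : ℂ) - z)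
          have h3 : ‖(((1 - 3*r/4 : ℝ)) : ℂ) - z‖
              = ‖z - (((1 - 3*r/4 : ℝ)) : ℂ)‖ := norm_sub_rev _ _
          have he : ‖1 - z‖
              = ‖((3*r/4 : ℝ) : ℂ) + ((((1 - 3*r/4 : ℝ)) : ℂ) - z)‖ := by
            congr 1
            push_cast
            ring
          calc ‖1 - z‖
              = ‖((3*r/4 : ℝ) : ℂ) + ((((1 - 3*r/4 : ℝ)) : ℂ) - z)‖ := he
            _ ≤ ‖((3*r/4 : ℝ) : ℂ)‖ + ‖(((1 - 3*r/4 : ℝ)) : ℂ) - z‖ := h2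
            _ = 3*r/4 + ‖z - (((1 - 3*r/4 : ℝ)) : ℂ)‖ := by
                rw [h3, Complex.norm_real, Real.norm_eq_abs, abs_of_nonneg (by linarith)]
            _ < 3*r/4 + r/4 := by linarith
            _ = r := by ring
        obtain ⟨hkor, hest⟩ := key z hz1
        refine Set.mem_preimage.mpr ⟨hkor.1, ?_⟩
        calc ‖1 - φ z‖ ≤ (2*ε*κ) * ‖1-z‖ ^ β := hest
          _ < (2*ε*κ) * r ^ β := by
              apply mul_lt_mul_of_pos_left _ (by rw [← hMdef]; exact hM)
              exact Real.rpow_lt_rpow (norm_nonneg _) h1z hβ0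
          _ = M * (h/M) := by rw [hrβ, hMdef]
          _ = h := by field_simp
      calc ENNReal.ofReal (cα * (Real.pi/16) / M ^ ((2+α)/β) * h ^ ((2 + α) / β))
          = ENNReal.ofReal (cα * (Real.pi/16) * r ^ (2+α)) := by
            congr 1
            have hexp : β⁻¹ * (2+α) = (2+α)/β := by
              rw [div_eq_mul_inv]; ring
            have hr2α : r ^ (2+α) = h ^ ((2+α)/β) / M ^ ((2+α)/β) := by
              rw [hrdef, ← Real.rpow_mul hdivpos.le, hexp,
                Real.div_rpow hh0.le hM.le]
            rw [hr2α]
            ring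
          _ ≤ vDisc α (φ ⁻¹' discS h) := measure_lb α r hr0 hr1 _ hsub
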